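/- arXiv:1606.02919 — 2 statements merged into one kernel-verified Lean document; each statement's English description precedes it below -/
import Mathlib

section
/- Fix n ≥ 1 and consider the system with A = 1.1·I_n, B = I_n, X = [−10,10]ⁿ, U = [−1,1]ⁿ. For every λ ∈ [0.6, 1], the set C = [−2,2]ⁿ is λ-contractive, and the maximal λ-contractive set is C_max^λ = [−c, c]ⁿ with c = 1/(1.1 − λ). -/
open Set Metric Pointwise

noncomputable section

abbrev Euc (n : ℕ) := EuclideanSpace ℝ (Fin n)

def IsCSet {n : ℕ} (C : Set (Euc n)) : Prop :=
  Convex ℝ C ∧ IsCompact C ∧ (0 : Euc n) ∈ interior C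

def rho {n : ℕ} (ξ : Euc n) (C : Set (Euc n)) : ℝ :=
  sSup {μ : ℝ | 0 < μ ∧ μ • ξ ∈ C}

def cdist {n : ℕ} (C D : Set (Euc n)) : ℝ :=
  ⨆ ξ : sphere (0 : Euc n) 1, |Real.log (rho ξ C) - Real.log (rho ξ D)|

def Q1 {n m : ℕ} (A : Matrix (Fin n) (Fin n) ℝ) (B : Matrix (Fin n) (Fin m) ℝ)
    (X : Set (Euc n)) (U : Set (Euc m)) (lam : ℝ) (D : Set (Euc n)) : Set (Euc n) :=
  {x ∈ X | ∃ u ∈ U, WithLp.toLp 2 (A.mulVec x + B.mulVec u) ∈ lam • D}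

def Qiter {n m : ℕ} (A : Matrix (Fin n) (Fin n) ℝ) (B : Matrix (Fin n) (Fin m) ℝ)
    (X : Set (Euc n)) (U : Set (Euc m)) (lam : ℝ) (D : Set (Euc n)) : ℕ → Set (Euc n)
  | 0 => D
  | k + 1 => Q1 A B X U lam (Qiter A B X U lam D k)

def IsContractive {n m : ℕ} (A : Matrix (Fin n) (Fin n) ℝ) (B : Matrix (Fin n) (Fin m) ℝ)
    (X : Set (Euc n)) (U : Set (Euc m)) (lam : ℝ) (C : Set (Euc n)) : Prop :=
  C ⊆ X ∧ ∀ x ∈ C, ∃ u ∈ U, WithLp.toLp 2 (A.mulVec x + B.mulVec u) ∈ lam • C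

def Cmax {n m : ℕ} (A : Matrix (Fin n) (Fin n) ℝ) (B : Matrix (Fin n) (Fin m) ℝ)
    (X : Set (Euc n)) (U : Set (Euc m)) (lam : ℝ) : Set (Euc n) :=
  ⋃₀ {C | IsContractive A B X U lam C}

def ctrb {n m : ℕ} (A : Matrix (Fin n) (Fin n) ℝ) (B : Matrix (Fin n) (Fin m) ℝ) :
    Matrix (Fin n) (Fin n × Fin m) ℝ :=
  Matrix.of fun i p => (A ^ (n - 1 - (p.1 : ℕ)) * B) i p.2

def Controllable {n m : ℕ} (A : Matrix (Fin n) (Fin n) ℝ)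
    (B : Matrix (Fin n) (Fin m) ℝ) : Prop :=
  (ctrb A B).rank = n

def enorm {ι : Type*} [Fintype ι] (v : ι → ℝ) : ℝ :=
  ‖(WithLp.equiv 2 (ι → ℝ)).symm v‖

def sigmaMax {n : ℕ} {ι : Type*} [Fintype ι] (Φ : Matrix (Fin n) ι ℝ) : ℝ :=
  ⨆ ξ : sphere (0 : EuclideanSpace ℝ ι) 1, enorm (Φ.mulVec ξ)

def sigmaMin {n : ℕ} {ι : Type*} [Fintype ι] (Φ : Matrix (Fin n) ι ℝ) : ℝ :=
  ⨅ ξ : sphere (0 : Euc n) 1, enorm (Φ.transpose.mulVec ξ)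

def alphaA {n : ℕ} (A : Matrix (Fin n) (Fin n) ℝ) : ℝ :=
  max 1 (⨆ j ∈ Finset.Icc 1 n, sigmaMax (A ^ j))

def rhoHat {n m : ℕ} (A : Matrix (Fin n) (Fin n) ℝ) (B : Matrix (Fin n) (Fin m) ℝ)
    (lam rx ru : ℝ) : ℝ :=
  lam ^ (n - 1) / alphaA A *
    min (rx / (1 + sigmaMax (ctrb A B) / sigmaMin (ctrb A B)))
        (ru * sigmaMin (ctrb A B))

end

/-- The hypercube `[-a, a]ⁿ`. -/
def cube {n : ℕ} (a : ℝ) : Set (Euc n) := {x : Euc n | ∀ i, |x i| ≤ a}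

lemma clamp_bound (t : ℝ) :
    |t + max (-1) (min 1 (-t))| ≤ max (|t| - 1) 0 := by
  rcases le_total 1 (-t) with h | h
  · rw [min_eq_left h, max_eq_right (by linarith : (-1:ℝ) ≤ (1:ℝ)),
      abs_of_nonpos (by linarith : t + 1 ≤ 0), abs_of_nonpos (by linarith : t ≤ 0)]
    exact le_max_of_le_left (by linarith)
  · rcases le_total (-t) (-1) with h2 | h2
    · rw [min_eq_right h, max_eq_left h2, abs_of_nonneg (by linarith : (0:ℝ) ≤ t + -1),
        abs_of_nonneg (by linarith : (0:ℝ) ≤ t)]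
      exact le_max_of_le_left (by linarith)
    · rw [min_eq_right h, max_eq_right h2]
      simp

lemma cube_contr {n : ℕ} {lam a : ℝ} (hl : 0 < lam) (ha : 0 ≤ a) (h10 : a ≤ 10)
    (hkey : 1.1 * a - 1 ≤ lam * a) :
    IsContractive ((1.1 : ℝ) • (1 : Matrix (Fin n) (Fin n) ℝ))
      (1 : Matrix (Fin n) (Fin n) ℝ) (cube 10) (cube 1) lam (cube a) := by
  constructor
  · intro x hx i
    exact (hx i).trans h10
  · intro x hx
    refine ⟨(WithLp.toLp 2 (fun i => max (-1) (min 1 (-(1.1 * x i)))) : Euc n), ?_, ?_⟩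
    · intro i
      show |max (-1) (min 1 (-(1.1 * x i)))| ≤ 1
      rw [abs_le]
      exact ⟨le_max_left _ _, max_le (by norm_num) (min_le_left _ _)⟩
    · rw [Set.mem_smul_set_iff_inv_smul_mem₀ hl.ne']
      intro i
      have hA : (((1.1 : ℝ) • (1 : Matrix (Fin n) (Fin n) ℝ)).mulVec x)
          = (1.1 : ℝ) • (x : Fin n → ℝ) := by
        rw [Matrix.smul_mulVec, Matrix.one_mulVec]
      have hval : (lam⁻¹ • WithLp.toLp 2 (((1.1 : ℝ) • (1 : Matrix (Fin n) (Fin n) ℝ)).mulVec x +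
          (1 : Matrix (Fin n) (Fin n) ℝ).mulVec
            (WithLp.ofLp (WithLp.toLp 2 (fun i => max (-1) (min 1 (-(1.1 * x i)))) : Euc n))) : Euc n) i
          = lam⁻¹ * (1.1 * x i + max (-1) (min 1 (-(1.1 * x i)))) := by
        rw [Matrix.one_mulVec]
        show lam⁻¹ * (((1.1 : ℝ) • (1 : Matrix (Fin n) (Fin n) ℝ)).mulVec x i
          + max (-1) (min 1 (-(1.1 * x i)))) = _
        rw [hA]
        show lam⁻¹ * (1.1 * x i + _) = _
        ring
      show |(lam⁻¹ • _ : Euc n) i| ≤ a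
      rw [hval, abs_mul, abs_inv, abs_of_pos hl, inv_mul_le_iff₀ hl]
      have h1 := clamp_bound (1.1 * x i)
      have h2 := hx i
      rw [abs_mul] at h1
      have h3 : |(1.1 : ℝ)| = 1.1 := by norm_num
      rw [h3] at h1
      refine h1.trans (max_le ?_ (by positivity))
      nlinarith

theorem stmt17 {n : ℕ} (hn : 1 ≤ n) (lam : ℝ) (hlam : lam ∈ Set.Icc (0.6 : ℝ) 1) :
    IsContractive ((1.1 : ℝ) • (1 : Matrix (Fin n) (Fin n) ℝ))
        (1 : Matrix (Fin n) (Fin n) ℝ) (cube 10) (cube 1) lam (cube 2) ∧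
      Cmax ((1.1 : ℝ) • (1 : Matrix (Fin n) (Fin n) ℝ)) (1 : Matrix (Fin n) (Fin n) ℝ)
          (cube 10) (cube 1) lam
        = cube (1 / (1.1 - lam)) := by
  obtain ⟨hl0, hl1⟩ := hlam
  have hlpos : (0 : ℝ) < lam := by linarith
  have hd : (0 : ℝ) < 1.1 - lam := by linarith
  constructor
  · exact cube_contr hlpos (by norm_num) (by norm_num) (by linarith)
  · apply Set.Subset.antisymm
    · rintro x ⟨C, hC, hx⟩
      intro i
      set S : Set ℝ := {r | ∃ y ∈ C, ∃ j, |y j| = r} with hS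
      have hne : S.Nonempty := ⟨|x i|, x, hx, i, rfl⟩
      have hbdd : BddAbove S := by
        refine ⟨10, ?_⟩
        rintro r ⟨y, hy, j, rfl⟩
        exact hC.1 hy j
      set M := sSup S with hM
      have key : ∀ r ∈ S, 1.1 * r ≤ lam * M + 1 := by
        rintro r ⟨y, hy, j, rfl⟩
        obtain ⟨u, hu, hmem⟩ := hC.2 y hy
        obtain ⟨c', hc', hEq⟩ := Set.mem_smul_set.1 hmem
        have hj : lam * c' j = 1.1 * y j + u j := by
          have h1 := congrArg (fun v : Euc n => v j) hEq
          have hA : (((1.1 : ℝ) • (1 : Matrix (Fin n) (Fin n) ℝ)).mulVec y)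
              = (1.1 : ℝ) • (y : Fin n → ℝ) := by
            rw [Matrix.smul_mulVec, Matrix.one_mulVec]
          simpa [hA, Matrix.one_mulVec] using h1
        have hcM : |c' j| ≤ M := le_csSup hbdd ⟨c', hc', j, rfl⟩
        have huj : |u j| ≤ 1 := hu j
        have h2 : |1.1 * y j| ≤ lam * |c' j| + |u j| := by
          have : (1.1 : ℝ) * y j = lam * c' j - u j := by linarith
          rw [this]
          calc |lam * c' j - u j| ≤ |lam * c' j| + |u j| := abs_sub _ _
            _ = lam * |c' j| + |u j| := by rw [abs_mul, abs_of_pos hlpos]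
        rw [abs_mul] at h2
        have h3 : |(1.1 : ℝ)| = 1.1 := by norm_num
        rw [h3] at h2
        nlinarith
      have hM2 : M ≤ (lam * M + 1) / 1.1 := by
        apply csSup_le hne
        intro r hr
        rw [le_div_iff₀ (by norm_num : (0:ℝ) < 1.1)]
        have := key r hr
        linarith
      have hM3 : M * 1.1 ≤ lam * M + 1 := (le_div_iff₀ (by norm_num)).1 hM2
      have hMc : M ≤ 1 / (1.1 - lam) := by
        rw [le_div_iff₀ hd]
        nlinarith
      have : |x i| ≤ M := le_csSup hbdd ⟨x, hx, i, rfl⟩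
      exact this.trans hMc
    · intro x hx
      refine ⟨cube (1 / (1.1 - lam)), ?_, hx⟩
      refine cube_contr hlpos (by positivity) ?_ ?_
      · rw [div_le_iff₀ hd]; linarith
      · have h1 : (1.1 - lam) * (1 / (1.1 - lam)) = 1 := by
          field_simp
        nlinarith
end

section
/- Fix n ≥ 1 and consider the system with A = 1.1·I_n, B = I_n, X = [−10,10]ⁿ, U = [−1,1]ⁿ, and let C = [−2,2]ⁿ. For every k ∈ ℕ and every λ ∈ [0.6, 1], Q_k^λ(C) = [−c_k^λ, c_k^λ]ⁿ with c_k^λ = 2·(λ/1.1)^k + (1 − (λ/1.1)^k)/(1.1 − λ), and Q_k^λ(X) = [−x_k^λ, x_k^λ]ⁿ with x_k^λ = 10·(λ/1.1)^k + (1 − (λ/1.1)^k)/(1.1 − λ). -/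
open Set Metric Pointwise

lemma aux_scalar (b c : ℝ) (hb : 0 ≤ b) :
    (∃ u : ℝ, |u| ≤ 1 ∧ |c + u| ≤ b) ↔ |c| ≤ b + 1 := by
  constructor
  · rintro ⟨u, hu, h⟩
    have h1 := abs_le.mp hu
    have h2 := abs_le.mp h
    rw [abs_le]; constructor <;> linarith [h1.1, h1.2, h2.1, h2.2]
  · intro h
    have h' := abs_le.mp h
    rcases le_total c 1 with h1 | h1
    · rcases le_total (-1) c with h2 | h2
      · exact ⟨-c, by rw [abs_neg, abs_le]; exact ⟨h2, h1⟩, by simpa using hb⟩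
      · refine ⟨1, by norm_num, ?_⟩
        rw [abs_le]; constructor <;> linarith [h'.1, h'.2]
    · refine ⟨-1, by norm_num, ?_⟩
      rw [abs_le]; constructor <;> linarith [h'.1, h'.2]

lemma smul_cube {n : ℕ} {lam a : ℝ} (hlam : 0 < lam) :
    lam • (cube a : Set (Euc n)) = cube (lam * a) := by
  ext x
  rw [Set.mem_smul_set_iff_inv_smul_mem₀ hlam.ne']
  constructor
  · intro h i
    have hi := h i
    simp only [PiLp.smul_apply, smul_eq_mul, abs_mul, abs_inv, abs_of_pos hlam] at hi
    calc |x i| = lam * (lam⁻¹ * |x i|) := by field_simp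
    _ ≤ lam * a := by nlinarith
  · intro h i
    have hi := h i
    simp only [PiLp.smul_apply, smul_eq_mul, abs_mul, abs_inv, abs_of_pos hlam]
    calc lam⁻¹ * |x i| ≤ lam⁻¹ * (lam * a) :=
      mul_le_mul_of_nonneg_left hi (inv_nonneg.mpr hlam.le)
    _ = a := by field_simp

lemma Q1_cube {n : ℕ} (hn : 1 ≤ n) {lam a : ℝ} (hlam : 0 < lam) (ha : 0 ≤ a)
    (hle : (lam * a + 1) / 1.1 ≤ 10) :
    Q1 ((1.1 : ℝ) • (1 : Matrix (Fin n) (Fin n) ℝ)) (1 : Matrix (Fin n) (Fin n) ℝ)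
        (cube 10) (cube 1) lam (cube a)
      = cube ((lam * a + 1) / 1.1) := by
  have hb : 0 ≤ lam * a := mul_nonneg hlam.le ha
  ext x
  simp only [Q1, Set.mem_setOf_eq, smul_cube hlam, Matrix.smul_mulVec,
    Matrix.one_mulVec]
  constructor
  · rintro ⟨_, u, hu, h⟩ i
    have hi : |(1.1 : ℝ) * x i + u i| ≤ lam * a := h i
    have hc : |(1.1 : ℝ) * x i| ≤ lam * a + 1 :=
      (aux_scalar _ _ hb).mp ⟨u i, hu i, hi⟩
    rw [abs_mul] at hc
    rw [le_div_iff₀ (by norm_num : (0:ℝ) < 1.1)]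
    calc |x i| * 1.1 = |(1.1:ℝ)| * |x i| := by rw [abs_of_pos (by norm_num : (0:ℝ) < 1.1)]; ring
    _ ≤ lam * a + 1 := hc
  · intro h
    have hx10 : x ∈ cube (10 : ℝ) := fun i => le_trans (h i) hle
    refine ⟨hx10, ?_⟩
    have hui : ∀ i, ∃ u : ℝ, |u| ≤ 1 ∧ |1.1 * x i + u| ≤ lam * a := by
      intro i
      apply (aux_scalar _ _ hb).mpr
      have := h i
      rw [abs_mul, abs_of_pos (by norm_num : (0:ℝ) < 1.1)]
      rw [le_div_iff₀ (by norm_num : (0:ℝ) < 1.1)] at this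
      linarith
    choose u hu1 hu2 using hui
    exact ⟨WithLp.toLp 2 (u : Fin n → ℝ), hu1, fun i => by
      simpa using hu2 i⟩

lemma Qiter_cube {n : ℕ} (hn : 1 ≤ n) {lam a : ℝ} (hlam : lam ∈ Set.Icc (0.6 : ℝ) 1)
    (ha0 : 0 ≤ a) (ha10 : a ≤ 10) (k : ℕ) :
    Qiter ((1.1 : ℝ) • (1 : Matrix (Fin n) (Fin n) ℝ)) (1 : Matrix (Fin n) (Fin n) ℝ)
        (cube 10) (cube 1) lam (cube a) k
      = cube (a * (lam / 1.1) ^ k + (1 - (lam / 1.1) ^ k) / (1.1 - lam)) := by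
  obtain ⟨hl1, hl2⟩ := hlam
  have hlpos : 0 < lam := by linarith
  have hd : (0:ℝ) < 1.1 - lam := by linarith
  have hr0 : (0:ℝ) ≤ lam / 1.1 := by positivity
  have hr1 : lam / 1.1 ≤ 1 := by rw [div_le_one (by norm_num : (0:ℝ) < 1.1)]; linarith
  -- bounds on c k
  set c : ℕ → ℝ := fun k => a * (lam / 1.1) ^ k + (1 - (lam / 1.1) ^ k) / (1.1 - lam)
    with hc
  have hrk : ∀ k, (0:ℝ) ≤ (lam / 1.1) ^ k ∧ (lam / 1.1) ^ k ≤ 1 := fun k =>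
    ⟨pow_nonneg hr0 k, pow_le_one₀ hr0 hr1⟩
  have hck0 : ∀ k, 0 ≤ c k := by
    intro k
    obtain ⟨h1, h2⟩ := hrk k
    have e1 : (0:ℝ) ≤ (1 - (lam / 1.1) ^ k) / (1.1 - lam) := div_nonneg (by linarith) hd.le
    have e2 : (0:ℝ) ≤ a * (lam / 1.1) ^ k := mul_nonneg ha0 h1
    simp only [hc]; linarith
  have hck10 : ∀ k, c k ≤ 10 := by
    intro k
    obtain ⟨h1, h2⟩ := hrk k
    have hfix : (1 - (lam / 1.1) ^ k) / (1.1 - lam) ≤ 10 * (1 - (lam / 1.1) ^ k) := by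
      rw [div_le_iff₀ hd]
      nlinarith
    have : a * (lam / 1.1) ^ k ≤ 10 * (lam / 1.1) ^ k := by nlinarith
    simp only [hc]; nlinarith
  have hstep : ∀ k, c (k + 1) = (lam * c k + 1) / 1.1 := by
    intro k
    simp only [hc, pow_succ]
    field_simp
    ring
  induction k with
  | zero => simp [Qiter, hc]
  | succ k ih =>
    show Q1 ((1.1 : ℝ) • (1 : Matrix (Fin n) (Fin n) ℝ)) (1 : Matrix (Fin n) (Fin n) ℝ)
        (cube 10) (cube 1) lam
        (Qiter ((1.1 : ℝ) • (1 : Matrix (Fin n) (Fin n) ℝ)) (1 : Matrix (Fin n) (Fin n) ℝ)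
          (cube 10) (cube 1) lam (cube a) k) = cube (c (k+1))
    rw [ih, hstep k]
    apply Q1_cube hn hlpos (hck0 k)
    rw [← hstep k]
    exact hck10 (k+1)

theorem stmt18 {n : ℕ} (hn : 1 ≤ n) (k : ℕ) (lam : ℝ)
    (hlam : lam ∈ Set.Icc (0.6 : ℝ) 1) :
    Qiter ((1.1 : ℝ) • (1 : Matrix (Fin n) (Fin n) ℝ)) (1 : Matrix (Fin n) (Fin n) ℝ)
        (cube 10) (cube 1) lam (cube 2) k
      = cube (2 * (lam / 1.1) ^ k + (1 - (lam / 1.1) ^ k) / (1.1 - lam)) ∧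
    Qiter ((1.1 : ℝ) • (1 : Matrix (Fin n) (Fin n) ℝ)) (1 : Matrix (Fin n) (Fin n) ℝ)
        (cube 10) (cube 1) lam (cube 10) k
      = cube (10 * (lam / 1.1) ^ k + (1 - (lam / 1.1) ^ k) / (1.1 - lam)) :=
  ⟨Qiter_cube hn hlam (by norm_num) (by norm_num) k,
   Qiter_cube hn hlam (by norm_num) (by norm_num) k⟩
end
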